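/- Let I = [0,a], let f : I → ℝ be superterzatic, let x₁,…,xₙ ∈ I, and let p₁,…,pₙ ∈ (0,1) and r₁,…,rₙ ∈ (0,1) with ∑pᵢ = ∑rᵢ = 1. Set M = max_{1≤i≤n} pᵢ/rᵢ and x̌ = ∑_{i=1}^n rᵢ xᵢ. Then M·J(f,r,x) − J(f,p,x) ≥ ∑_{i=1}^n (M rᵢ − pᵢ) xᵢ [ (xᵢ − x̌) C(x̌) + f(|xᵢ − x̌|)/|xᵢ − x̌| ] + (∑_{i=1}^n pᵢ xᵢ) [ (∑_{i=1}^n (pᵢ − rᵢ) xᵢ) C(x̌) + f(|∑_{i=1}^n (pᵢ − rᵢ) xᵢ|)/|∑_{i=1}^n (pᵢ − rᵢ) xᵢ| ], where C(x̌) is the constant provided by superterzaticity of f at x̌. -/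

import Mathlib

open Finset

/-- `SuperterzaticWith a f C` : the function `f` is superterzatic on `I = [0,a]`,
with `C x̄` the constant provided at each point `x̄ ∈ I`. -/
def SuperterzaticWith (a : ℝ) (f : ℝ → ℝ) (C : ℝ → ℝ) : Prop :=
  ∀ xbar ∈ Set.Icc (0 : ℝ) a, ∀ (n : ℕ) (x p : Fin n → ℝ),
    (∀ i, x i ∈ Set.Icc (0 : ℝ) a) → (∀ i, 0 ≤ p i) → (∑ i, p i = 1) →
    (∑ i, p i * x i = xbar) →
    ∑ i, p i * f (x i) - f xbar ≥
      ∑ i, p i * x i * ((x i - xbar) * C xbar + f |x i - xbar| / |x i - xbar|)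

/-- The Jensen functional `J(f, p, x)`. -/
noncomputable def jensenFunctional (f : ℝ → ℝ) {n : ℕ} (p x : Fin n → ℝ) : ℝ :=
  ∑ i, p i * f (x i) - f (∑ i, p i * x i)

/-- Corollary 8, second inequality. -/
theorem max_smul_jensen_sub_ge (a : ℝ) (f C : ℝ → ℝ)
    (hf : SuperterzaticWith a f C)
    (n : ℕ) (x p r : Fin n → ℝ)
    (hx : ∀ i, x i ∈ Set.Icc (0 : ℝ) a)
    (hp : ∀ i, p i ∈ Set.Ioo (0 : ℝ) 1) (hpsum : ∑ i, p i = 1)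
    (hr : ∀ i, r i ∈ Set.Ioo (0 : ℝ) 1) (hrsum : ∑ i, r i = 1)
    (M : ℝ) (hM : IsGreatest {v : ℝ | ∃ i : Fin n, v = p i / r i} M)
    (xcheck : ℝ) (hxcheck : xcheck = ∑ i, r i * x i) :
    M * jensenFunctional f r x - jensenFunctional f p x ≥
      (∑ i, (M * r i - p i) * x i *
        ((x i - xcheck) * C xcheck + f |x i - xcheck| / |x i - xcheck|))
      + (∑ i, p i * x i) *
          ((∑ i, (p i - r i) * x i) * C xcheck +
            f |∑ i, (p i - r i) * x i| / |∑ i, (p i - r i) * x i|) := by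
  obtain ⟨⟨i₀, hi₀⟩, hub⟩ := hM
  have hM0 : 0 < M := by
    rw [hi₀]; exact div_pos (hp i₀).1 (hr i₀).1
  have hMne : M ≠ 0 := hM0.ne'
  have hMr : ∀ i, p i ≤ M * r i := by
    intro i
    have h1 : p i / r i ≤ M := hub ⟨i, rfl⟩
    rw [div_le_iff₀ (hr i).1] at h1
    linarith
  have hmem : ∀ (q : Fin n → ℝ), (∀ i, 0 ≤ q i) → (∑ i, q i = 1) →
      ∑ i, q i * x i ∈ Set.Icc (0:ℝ) a := by
    intro q hq hqs
    constructor
    · exact Finset.sum_nonneg fun i _ => mul_nonneg (hq i) (hx i).1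
    · calc ∑ i, q i * x i ≤ ∑ i, q i * a :=
            Finset.sum_le_sum fun i _ => mul_le_mul_of_nonneg_left (hx i).2 (hq i)
        _ = a := by rw [← Finset.sum_mul, hqs, one_mul]
  have hxc : xcheck ∈ Set.Icc (0:ℝ) a :=
    hxcheck ▸ hmem r (fun i => (hr i).1.le) hrsum
  set P := ∑ i, p i * x i with hP
  have hPmem : P ∈ Set.Icc (0:ℝ) a := hmem p (fun i => (hp i).1.le) hpsum
  set X : Fin (n+1) → ℝ := Fin.snoc x P with hX
  set Q : Fin (n+1) → ℝ := Fin.snoc (fun i => (M * r i - p i)/M) (1/M) with hQ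
  have hXmem : ∀ i, X i ∈ Set.Icc (0:ℝ) a := by
    intro i
    refine Fin.lastCases ?_ ?_ i
    · simpa [hX] using hPmem
    · intro j; simpa [hX] using hx j
  have hQ0 : ∀ i, 0 ≤ Q i := by
    intro i
    refine Fin.lastCases ?_ ?_ i
    · simp [hQ]; positivity
    · intro j; simp only [hQ, Fin.snoc_castSucc]
      exact div_nonneg (by linarith [hMr j]) hM0.le
  have hQsum : ∑ i, Q i = 1 := by
    rw [Fin.sum_univ_castSucc]
    simp only [hQ, Fin.snoc_castSucc, Fin.snoc_last]
    rw [← Finset.sum_div, Finset.sum_sub_distrib, ← Finset.mul_sum, hrsum, hpsum]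
    field_simp
    ring
  have hQX : ∑ i, Q i * X i = xcheck := by
    rw [Fin.sum_univ_castSucc]
    simp only [hQ, hX, Fin.snoc_castSucc, Fin.snoc_last]
    have e : ∀ i : Fin n, (M * r i - p i)/M * x i = (M * (r i * x i) - p i * x i)/M := by
      intro i; field_simp
    rw [Finset.sum_congr rfl fun i _ => e i, ← Finset.sum_div,
      Finset.sum_sub_distrib, ← Finset.mul_sum, ← hxcheck, ← hP]
    field_simp
    ring
  have key := hf xcheck hxc (n+1) X Q hXmem hQ0 hQsum hQX
  rw [Fin.sum_univ_castSucc, Fin.sum_univ_castSucc] at key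
  simp only [hQ, hX, Fin.snoc_castSucc, Fin.snoc_last] at key
  -- multiply key by M
  have key2 := mul_le_mul_of_nonneg_left key.le hM0.le
  have eL : M * (∑ j, (M * r j - p j)/M * f (x j) + 1/M * f P - f xcheck)
      = (M * ∑ j, r j * f (x j) - ∑ j, p j * f (x j)) + f P - M * f xcheck := by
    rw [mul_sub, mul_add, Finset.mul_sum]
    have e : ∀ j : Fin n, M * ((M * r j - p j)/M * f (x j))
        = M * (r j * f (x j)) - p j * f (x j) := by
      intro j; field_simp
    rw [Finset.sum_congr rfl fun j _ => e j, Finset.sum_sub_distrib, ← Finset.mul_sum,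
      show M * (1/M * f P) = f P by field_simp]
  have eR : M * (∑ j, (M * r j - p j)/M * x j *
        ((x j - xcheck) * C xcheck + f |x j - xcheck| / |x j - xcheck|)
      + 1/M * P * ((P - xcheck) * C xcheck + f |P - xcheck| / |P - xcheck|))
      = (∑ j, (M * r j - p j) * x j *
          ((x j - xcheck) * C xcheck + f |x j - xcheck| / |x j - xcheck|))
        + P * ((P - xcheck) * C xcheck + f |P - xcheck| / |P - xcheck|) := by
    rw [mul_add, Finset.mul_sum]
    congr 1
    · refine Finset.sum_congr rfl fun j _ => ?_
      field_simp
    · field_simp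
  rw [eR, eL] at key2
  have hd : ∑ i, (p i - r i) * x i = P - xcheck := by
    simp only [sub_mul, Finset.sum_sub_distrib, hxcheck, hP]
  rw [hd]
  simp only [jensenFunctional, ← hxcheck, ← hP]
  linarith
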